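/- arXiv:2306.10546 — 3 statements merged into one kernel-verified Lean document; each statement's English description precedes it below -/
import Mathlib

section
/- Let X ~ N(0, V) be an m-dimensional centered Gaussian vector with positive definite covariance V, M = V⁻¹, a ∈ ℝ^m, and Δ = aᵀM. If Δ_i > 0 for all i, then P(X_j > a_j for all j) ≤ f(a, M) · (∏_i Δ_i)⁻¹, where f(a, M) = |M|^{1/2} (2π)^{-m/2} exp(-½ aᵀ M a). -/
open MeasureTheory Matrix Finset

lemma exp_shift_integral (c : ℝ) {b : ℝ} (hb : 0 < b) :
    ∫ t in Set.Ioi c, Real.exp (-(b * (t - c))) = b⁻¹ := by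
  have h0 : ∫ t in Set.Ioi (0:ℝ), Real.exp (-(b * t)) = b⁻¹ := by
    have := integral_comp_mul_left_Ioi (fun x => Real.exp (-x)) 0 hb
    simp only [mul_zero, integral_exp_neg_Ioi, neg_zero, Real.exp_zero, smul_eq_mul, mul_one]
      at this
    exact this
  calc ∫ t in Set.Ioi c, Real.exp (-(b * (t - c)))
      = ∫ t, (Set.Ioi (0:ℝ)).indicator (fun s => Real.exp (-(b * s))) (t - c) := by
        rw [← integral_indicator measurableSet_Ioi]
        congr 1
        ext t
        by_cases ht : c < t
        · simp [Set.indicator_of_mem, ht, sub_pos.mpr ht]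
        · have h2 : ¬ (0 < t - c) := fun h => ht (by linarith)
          simp [Set.indicator_of_notMem, ht, h2]
    _ = ∫ t, (Set.Ioi (0:ℝ)).indicator (fun s => Real.exp (-(b * s))) t := by
        simpa using integral_sub_right_eq_self
          ((Set.Ioi (0:ℝ)).indicator (fun s => Real.exp (-(b * s)))) c
    _ = b⁻¹ := by rw [integral_indicator measurableSet_Ioi, h0]

lemma exp_shift_integrable (c : ℝ) {b : ℝ} (hb : 0 < b) :
    Integrable ((Set.Ioi c).indicator (fun t => Real.exp (-(b * (t - c))))) := by
  rw [integrable_indicator_iff measurableSet_Ioi]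
  have h := (exp_neg_integrableOn_Ioi c hb).const_mul (Real.exp (b * c))
  have : (fun t => Real.exp (b * c) * Real.exp (-b * t)) =
      fun t => Real.exp (-(b * (t - c))) := by
    ext t; rw [← Real.exp_add]; ring_nf
  rwa [this] at h

theorem mills_ratio_upper (m : ℕ) (V : Matrix (Fin m) (Fin m) ℝ) (hV : V.PosDef)
    (a : Fin m → ℝ)
    (Δ : Fin m → ℝ) (hΔdef : ∀ i, Δ i = ∑ j, a j * V⁻¹ j i)
    (hΔ : ∀ i, 0 < Δ i)
    (f : (Fin m → ℝ) → ℝ)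
    (hf : ∀ x, f x = Real.sqrt (V⁻¹.det) * (2 * Real.pi) ^ (-(m : ℝ) / 2) *
        Real.exp (-(1 / 2) * (x ⬝ᵥ V⁻¹.mulVec x))) :
    (∫ x in {x : Fin m → ℝ | ∀ j, a j < x j}, f x) ≤ f a * (∏ i, Δ i)⁻¹ := by
  have hM : (V⁻¹).PosDef := hV.inv
  have hC : 0 ≤ Real.sqrt ((V⁻¹).det) * (2 * Real.pi) ^ (-(m : ℝ) / 2) :=
    mul_nonneg (Real.sqrt_nonneg _) (Real.rpow_nonneg (by positivity) _)
  have hfnn : ∀ x, 0 ≤ f x := fun x => by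
    rw [hf x]; exact mul_nonneg hC (Real.exp_nonneg _)
  set S : Set (Fin m → ℝ) := {x : Fin m → ℝ | ∀ j, a j < x j} with hS
  have hSmeas : MeasurableSet S := by
    have : S = Set.univ.pi fun j => Set.Ioi (a j) := by
      ext x; simp [hS, Set.mem_pi]
    rw [this]; exact MeasurableSet.univ_pi fun j => measurableSet_Ioi
  set g : (Fin m → ℝ) → ℝ := fun x => ∏ i, (Set.Ioi (a i)).indicator
      (fun t => Real.exp (-(Δ i * (t - a i)))) (x i) with hg
  have hgnn : ∀ x, 0 ≤ g x := fun x =>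
    Finset.prod_nonneg fun i _ => Set.indicator_nonneg (fun t _ => Real.exp_nonneg _) _
  have hgint : Integrable g := Integrable.fintype_prod fun i => exp_shift_integrable (a i) (hΔ i)
  -- symmetry of V⁻¹
  have hsym : ∀ i j, V⁻¹ j i = V⁻¹ i j := fun i j => by
    conv_lhs => rw [← hM.isHermitian.eq]
    simp [conjTranspose_apply]
  -- key quadratic expansion/inequality
  have hkey : ∀ x ∈ S, f x ≤ f a * g x := by
    intro x hx
    set y : Fin m → ℝ := fun i => x i - a i with hy
    have hxy : x = a + y := by funext i; simp [hy]
    have hay : a ⬝ᵥ V⁻¹ *ᵥ y = ∑ i, Δ i * y i := by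
      rw [dotProduct_mulVec]
      simp only [dotProduct, vecMul, Finset.sum_mul]
      congr 1; ext i
      rw [hΔdef i]
      simp [dotProduct, Finset.sum_mul]
    have hya : y ⬝ᵥ V⁻¹ *ᵥ a = ∑ i, Δ i * y i := by
      rw [dotProduct_mulVec]
      have : y ᵥ* V⁻¹ = V⁻¹ *ᵥ y := by
        funext i
        simp only [vecMul, mulVec, dotProduct]
        exact Finset.sum_congr rfl fun j _ => by rw [hsym i j]; ring
      rw [this, dotProduct_comm, dotProduct_mulVec]
      simp only [dotProduct, vecMul, Finset.sum_mul]
      congr 1; ext i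
      rw [hΔdef i]
      simp [dotProduct, Finset.sum_mul]
    have hyy : 0 ≤ y ⬝ᵥ V⁻¹ *ᵥ y := by
      have := hM.posSemidef.dotProduct_mulVec_nonneg y
      simpa using this
    have hexpand : x ⬝ᵥ V⁻¹ *ᵥ x
        = a ⬝ᵥ V⁻¹ *ᵥ a + (∑ i, Δ i * y i) + (∑ i, Δ i * y i) + y ⬝ᵥ V⁻¹ *ᵥ y := by
      rw [hxy, mulVec_add, dotProduct_add, add_dotProduct, add_dotProduct, hay, hya]
      ring
    have hineq : -(1/2) * (x ⬝ᵥ V⁻¹ *ᵥ x) ≤ -(1/2) * (a ⬝ᵥ V⁻¹ *ᵥ a) + ∑ i, -(Δ i * y i) := by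
      rw [hexpand, Finset.sum_neg_distrib]
      nlinarith [hyy]
    have hgx : g x = ∏ i, Real.exp (-(Δ i * (x i - a i))) := by
      rw [hg]
      exact Finset.prod_congr rfl fun i _ => Set.indicator_of_mem (hx i) _
    rw [hf x, hf a, hgx,
      mul_assoc (Real.sqrt ((V⁻¹).det) * (2 * Real.pi) ^ (-(m:ℝ)/2))]
    refine mul_le_mul_of_nonneg_left ?_ hC
    rw [← Real.exp_sum, ← Real.exp_add]
    exact Real.exp_le_exp.mpr hineq
  -- compare integrals
  have hle : (∫ x in S, f x) ≤ f a * ∫ x, g x := by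
    rw [← integral_indicator hSmeas, ← integral_const_mul]
    refine integral_mono_of_nonneg ?_ (hgint.const_mul _) ?_
    · exact Filter.Eventually.of_forall fun x => Set.indicator_nonneg (fun t _ => hfnn t) x
    · refine Filter.Eventually.of_forall fun x => ?_
      by_cases hx : x ∈ S
      · rw [Set.indicator_of_mem hx]; exact hkey x hx
      · rw [Set.indicator_of_notMem hx]
        exact mul_nonneg (hfnn a) (hgnn x)
  have hgval : (∫ x, g x) = (∏ i, Δ i)⁻¹ := by
    rw [hg, integral_fintype_prod_volume_eq_prod (f := fun i =>
      (Set.Ioi (a i)).indicator (fun t => Real.exp (-(Δ i * (t - a i))))),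
      ← Finset.prod_inv_distrib]
    exact Finset.prod_congr rfl fun i _ => by
      rw [integral_indicator measurableSet_Ioi, exp_shift_integral (a i) (hΔ i)]
  rw [hgval] at hle
  exact hle
end

section
/- Let X ~ N(0, V) be an m-dimensional centered Gaussian vector with positive definite covariance V, M = V⁻¹, a ∈ ℝ^m, Δ = aᵀM with Δ_i > 0 for all i. Then P(X_j > a_j for all j) ≥ f(a, M)·(∏_i Δ_i)⁻¹ · (1 - ½ Σ_i Σ_j m_{ij}(1 + δ_{ij})/(Δ_i Δ_j)), where f(a, M) = |M|^{1/2}(2π)^{-m/2} exp(-½ aᵀMa) and δ_{ij} is the Kronecker delta. -/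
open MeasureTheory Matrix Finset

namespace MillsAux

lemma oneD_integrable (n : ℕ) {b : ℝ} (hb : 0 < b) :
    IntegrableOn (fun t : ℝ => t ^ n * Real.exp (-(b * t))) (Set.Ioi 0) := by
  have h := integrableOn_rpow_mul_exp_neg_mul_rpow (p := 1) (s := (n : ℝ)) (b := b)
    (by have : (0:ℝ) ≤ n := Nat.cast_nonneg n; linarith) zero_lt_one hb
  refine h.congr_fun (fun t ht => ?_) measurableSet_Ioi
  beta_reduce
  rw [Real.rpow_natCast, Real.rpow_one, neg_mul]

lemma oneD_integral (n : ℕ) {b : ℝ} (hb : 0 < b) :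
    ∫ t in Set.Ioi (0:ℝ), t ^ n * Real.exp (-(b * t)) = (Nat.factorial n : ℝ) / b ^ (n + 1) := by
  have h := Real.integral_rpow_mul_exp_neg_mul_Ioi (a := (n : ℝ) + 1) (r := b)
    (by positivity) hb
  have h2 : ∀ t ∈ Set.Ioi (0:ℝ), t ^ ((n : ℝ) + 1 - 1) * Real.exp (-(b * t))
      = t ^ n * Real.exp (-(b * t)) := by
    intro t ht
    rw [add_sub_cancel_right, Real.rpow_natCast]
  rw [setIntegral_congr_fun measurableSet_Ioi h2] at h
  rw [h]
  rw [show ((n : ℝ) + 1) = ((n + 1 : ℕ) : ℝ) by push_cast; ring, Real.rpow_natCast,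
    Nat.cast_add, Nat.cast_one, Real.Gamma_nat_eq_factorial]
  rw [div_pow, one_pow]
  ring

variable {m : ℕ}

lemma hS_meas : MeasurableSet (Set.univ.pi fun _ : Fin m => Set.Ioi (0:ℝ)) :=
  MeasurableSet.univ_pi fun _ => measurableSet_Ioi

lemma indicator_prod (g : Fin m → ℝ → ℝ) (y : Fin m → ℝ) :
    (Set.univ.pi fun _ : Fin m => Set.Ioi (0:ℝ)).indicator (fun y => ∏ k, g k (y k)) y
      = ∏ k, (Set.Ioi (0:ℝ)).indicator (g k) (y k) := by
  by_cases hy : y ∈ (Set.univ.pi fun _ : Fin m => Set.Ioi (0:ℝ))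
  · rw [Set.indicator_of_mem hy]
    refine Finset.prod_congr rfl fun k _ => ?_
    rw [Set.indicator_of_mem (hy k (Set.mem_univ k))]
  · rw [Set.indicator_of_notMem hy]
    obtain ⟨k, hk⟩ : ∃ k, y k ∉ Set.Ioi (0:ℝ) := by
      simpa [Set.mem_pi] using hy
    exact (Finset.prod_eq_zero (Finset.mem_univ k) (Set.indicator_of_notMem hk _)).symm

lemma multi_integrable {g : Fin m → ℝ → ℝ} (hg : ∀ k, IntegrableOn (g k) (Set.Ioi 0)) :
    IntegrableOn (fun y : Fin m → ℝ => ∏ k, g k (y k))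
      (Set.univ.pi fun _ : Fin m => Set.Ioi (0:ℝ)) := by
  refine (integrable_indicator_iff hS_meas).1 ?_
  have : (Set.univ.pi fun _ : Fin m => Set.Ioi (0:ℝ)).indicator
      (fun y : Fin m → ℝ => ∏ k, g k (y k))
      = fun y => ∏ k, (Set.Ioi (0:ℝ)).indicator (g k) (y k) := funext (indicator_prod g)
  rw [this]
  exact Integrable.fintype_prod fun k => (integrable_indicator_iff measurableSet_Ioi).2 (hg k)

lemma multi_integral (g : Fin m → ℝ → ℝ) :
    ∫ y in (Set.univ.pi fun _ : Fin m => Set.Ioi (0:ℝ)), ∏ k, g k (y k)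
      = ∏ k, ∫ t in Set.Ioi (0:ℝ), g k t := by
  rw [← integral_indicator hS_meas]
  have : (Set.univ.pi fun _ : Fin m => Set.Ioi (0:ℝ)).indicator
      (fun y : Fin m → ℝ => ∏ k, g k (y k))
      = fun y => ∏ k, (Set.Ioi (0:ℝ)).indicator (g k) (y k) := funext (indicator_prod g)
  rw [this, volume_pi]
  beta_reduce
  rw [integral_fintype_prod_eq_prod (fun k => (Set.Ioi (0:ℝ)).indicator (g k))]
  exact Finset.prod_congr rfl fun k _ => integral_indicator measurableSet_Ioi

lemma prod_pow_E (i j : Fin m) (y : Fin m → ℝ) :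
    ∏ k, y k ^ ((if k = i then 1 else 0) + (if k = j then 1 else 0)) = y i * y j := by
  simp only [pow_add]
  rw [Finset.prod_mul_distrib]
  congr 1 <;> simp [pow_ite, Finset.prod_ite_eq']

lemma prod_fact_E (i j : Fin m) :
    (∏ k, (Nat.factorial ((if k = i then 1 else 0) + (if k = j then 1 else 0))) : ℕ)
      = if i = j then 2 else 1 := by
  by_cases hij : i = j
  · subst hij
    simp only [if_true]
    rw [Finset.prod_eq_single i]
    · simp
    · intro b _ hb; simp [hb]
    · simp
  · simp only [hij, if_false]
    apply Finset.prod_eq_one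
    intro k _
    rcases eq_or_ne k i with rfl | hk
    · simp [hij]
    · rcases eq_or_ne k j with rfl | hk2
      · simp [hk]
      · simp [hk, hk2]

end MillsAux

set_option maxHeartbeats 1000000 in
theorem mills_ratio_lower (m : ℕ) (V : Matrix (Fin m) (Fin m) ℝ) (hV : V.PosDef)
    (a : Fin m → ℝ)
    (Δ : Fin m → ℝ) (hΔdef : ∀ i, Δ i = ∑ j, a j * V⁻¹ j i)
    (hΔ : ∀ i, 0 < Δ i)
    (f : (Fin m → ℝ) → ℝ)
    (hf : ∀ x, f x = Real.sqrt (V⁻¹.det) * (2 * Real.pi) ^ (-(m : ℝ) / 2) *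
        Real.exp (-(1 / 2) * (x ⬝ᵥ V⁻¹.mulVec x))) :
    f a * (∏ i, Δ i)⁻¹ *
        (1 - (1 / 2) * ∑ i, ∑ j, V⁻¹ i j * (1 + if i = j then 1 else 0) / (Δ i * Δ j)) ≤
      ∫ x in {x : Fin m → ℝ | ∀ j, a j < x j}, f x := by
  classical
  set M := V⁻¹ with hMdef
  have hM : M.PosDef := hV.inv
  have hMsymm : ∀ i j, M i j = M j i := fun i j => by
    simpa using (hM.1.apply i j).symm
  have hQnonneg : ∀ y : Fin m → ℝ, 0 ≤ y ⬝ᵥ M.mulVec y := fun y => by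
    simpa using hM.posSemidef.dotProduct_mulVec_nonneg y
  have hfa : 0 ≤ f a := by rw [hf]; positivity
  set S : Set (Fin m → ℝ) := Set.univ.pi fun _ => Set.Ioi (0:ℝ) with hSdef
  have hSm : MeasurableSet S := MillsAux.hS_meas
  -- integrability and values of basic product integrals
  have hInt : ∀ e : Fin m → ℕ,
      IntegrableOn (fun y : Fin m → ℝ => ∏ k, (y k) ^ (e k) * Real.exp (-(Δ k * y k))) S :=
    fun e => MillsAux.multi_integrable (g := fun k t => t ^ (e k) * Real.exp (-(Δ k * t)))
      fun k => MillsAux.oneD_integrable (e k) (hΔ k)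
  have hVal : ∀ e : Fin m → ℕ,
      ∫ y in S, ∏ k, (y k) ^ (e k) * Real.exp (-(Δ k * y k))
        = ∏ k, (Nat.factorial (e k) : ℝ) / Δ k ^ (e k + 1) := fun e => by
    rw [MillsAux.multi_integral (fun k t => t ^ (e k) * Real.exp (-(Δ k * t)))]
    exact Finset.prod_congr rfl fun k _ => MillsAux.oneD_integral (e k) (hΔ k)
  set E : Fin m → Fin m → Fin m → ℕ :=
    fun i j k => (if k = i then 1 else 0) + (if k = j then 1 else 0) with hE
  set Z : Fin m → ℕ := fun _ => 0 with hZ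
  have hexpprod : ∀ y : Fin m → ℝ, (∏ k, Real.exp (-(Δ k * y k)))
      = Real.exp (-(∑ k, Δ k * y k)) := fun y => by
    rw [← Real.exp_sum]
    congr 1
    rw [← Finset.sum_neg_distrib]
  have hprodZ : ∀ y : Fin m → ℝ,
      (∏ k, (y k) ^ (Z k) * Real.exp (-(Δ k * y k))) = Real.exp (-(∑ k, Δ k * y k)) := fun y => by
    rw [← hexpprod y]
    exact Finset.prod_congr rfl fun k _ => by simp [hZ]
  have hprodE : ∀ (i j : Fin m) (y : Fin m → ℝ),
      (∏ k, (y k) ^ (E i j k) * Real.exp (-(Δ k * y k)))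
        = y i * y j * Real.exp (-(∑ k, Δ k * y k)) := fun i j y => by
    rw [Finset.prod_mul_distrib, hexpprod y]
    congr 1
    exact MillsAux.prod_pow_E i j y
  -- quadratic expansion
  have cross : ∀ y : Fin m → ℝ, a ⬝ᵥ M.mulVec y = ∑ k, Δ k * y k := by
    intro y
    simp only [dotProduct, mulVec, Finset.mul_sum, hΔdef, Finset.sum_mul]
    rw [Finset.sum_comm]
    exact Finset.sum_congr rfl fun k _ => Finset.sum_congr rfl fun i _ => by ring
  have cross2 : ∀ y : Fin m → ℝ, y ⬝ᵥ M.mulVec a = ∑ k, Δ k * y k := by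
    intro y
    simp only [dotProduct, mulVec, Finset.mul_sum, hΔdef, Finset.sum_mul]
    exact Finset.sum_congr rfl fun k _ => Finset.sum_congr rfl fun j _ => by
      rw [hMsymm k j]; ring
  have key : ∀ y : Fin m → ℝ, f (y + a)
      = f a * (Real.exp (-(∑ k, Δ k * y k)) * Real.exp (-(1/2) * (y ⬝ᵥ M.mulVec y))) := by
    intro y
    rw [hf (y + a), hf a]
    have hq : (y + a) ⬝ᵥ M.mulVec (y + a)
        = y ⬝ᵥ M.mulVec y + 2 * (∑ k, Δ k * y k) + a ⬝ᵥ M.mulVec a := by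
      rw [mulVec_add, dotProduct_add, add_dotProduct, add_dotProduct, cross y, cross2 y]
      ring
    rw [hq]
    rw [show -(1/2:ℝ) * (y ⬝ᵥ M.mulVec y + 2 * (∑ k, Δ k * y k) + a ⬝ᵥ M.mulVec a)
        = -(1/2) * (a ⬝ᵥ M.mulVec a) + (-(∑ k, Δ k * y k) + -(1/2) * (y ⬝ᵥ M.mulVec y)) by ring,
      Real.exp_add, Real.exp_add]
    ring
  -- pointwise identity for the lower bound function
  have hptwise : ∀ y : Fin m → ℝ,
      (∏ k, (y k) ^ (Z k) * Real.exp (-(Δ k * y k)))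
        - (1/2) * ∑ i, ∑ j, M i j * ∏ k, (y k) ^ (E i j k) * Real.exp (-(Δ k * y k))
      = Real.exp (-(∑ k, Δ k * y k)) * (1 - (1/2) * (y ⬝ᵥ M.mulVec y)) := by
    intro y
    rw [hprodZ y]
    simp only [hprodE]
    rw [mul_sub, mul_one]
    congr 1
    simp only [dotProduct, mulVec, Finset.mul_sum]
    exact Finset.sum_congr rfl fun i _ => Finset.sum_congr rfl fun j _ => by ring
  -- integrability of the two functions
  have hsumInt : IntegrableOn
      (fun y : Fin m → ℝ => ∑ i, ∑ j, M i j * ∏ k, (y k) ^ (E i j k) * Real.exp (-(Δ k * y k)))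
      S := by
    refine integrable_finset_sum _ fun i _ => ?_
    refine integrable_finset_sum _ fun j _ => ?_
    exact (hInt (E i j)).const_mul (M i j)
  have hLint : IntegrableOn
      (fun y : Fin m → ℝ => f a * ((∏ k, (y k) ^ (Z k) * Real.exp (-(Δ k * y k)))
        - (1/2) * ∑ i, ∑ j, M i j * ∏ k, (y k) ^ (E i j k) * Real.exp (-(Δ k * y k)))) S :=
    ((hInt Z).sub (hsumInt.const_mul (1/2))).const_mul (f a)
  have hfc : Continuous f := by
    have hfe : f = fun x => Real.sqrt (M.det) * (2 * Real.pi) ^ (-(m : ℝ) / 2) *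
        Real.exp (-(1 / 2) * (x ⬝ᵥ M.mulVec x)) := funext hf
    rw [hfe]
    have hQc : Continuous fun x : Fin m → ℝ => x ⬝ᵥ M.mulVec x := by
      simp only [dotProduct, mulVec]
      exact continuous_finset_sum _ fun i _ => (continuous_apply i).mul
        (continuous_finset_sum _ fun j _ => continuous_const.mul (continuous_apply j))
    exact continuous_const.mul (Real.continuous_exp.comp (continuous_const.mul hQc))
  have hFc : Continuous fun y : Fin m → ℝ => f (y + a) :=
    hfc.comp (continuous_id.add continuous_const)
  have hfnonneg : ∀ x, 0 ≤ f x := fun x => by rw [hf]; positivity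
  have hFbound : ∀ y : Fin m → ℝ, ‖f (y + a)‖
      ≤ ‖f a * ∏ k, (y k) ^ (Z k) * Real.exp (-(Δ k * y k))‖ := by
    intro y
    have hpz : (0:ℝ) ≤ f a * ∏ k, (y k) ^ (Z k) * Real.exp (-(Δ k * y k)) := by
      rw [hprodZ y]
      positivity
    rw [Real.norm_eq_abs, Real.norm_eq_abs, abs_of_nonneg (hfnonneg _), abs_of_nonneg hpz,
      key y, hprodZ y]
    have h1 : Real.exp (-(1/2) * (y ⬝ᵥ M.mulVec y)) ≤ 1 := by
      rw [Real.exp_le_one_iff]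
      have := hQnonneg y
      linarith
    have h2 : (0:ℝ) ≤ Real.exp (-(∑ k, Δ k * y k)) := (Real.exp_pos _).le
    calc f a * (Real.exp (-(∑ k, Δ k * y k)) * Real.exp (-(1/2) * (y ⬝ᵥ M.mulVec y)))
        ≤ f a * (Real.exp (-(∑ k, Δ k * y k)) * 1) :=
          mul_le_mul_of_nonneg_left (mul_le_mul_of_nonneg_left h1 h2) hfa
      _ = f a * Real.exp (-(∑ k, Δ k * y k)) := by ring
  have hFint : IntegrableOn (fun y : Fin m → ℝ => f (y + a)) S :=
    (((hInt Z).const_mul (f a)).mono hFc.aestronglyMeasurable.restrict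
      (Filter.Eventually.of_forall hFbound))
  -- pointwise inequality
  have hle : ∀ y ∈ S,
      f a * ((∏ k, (y k) ^ (Z k) * Real.exp (-(Δ k * y k)))
        - (1/2) * ∑ i, ∑ j, M i j * ∏ k, (y k) ^ (E i j k) * Real.exp (-(Δ k * y k)))
      ≤ f (y + a) := by
    intro y _
    rw [key y, hptwise y]
    have h2 := Real.add_one_le_exp (-(1/2) * (y ⬝ᵥ M.mulVec y))
    have h3 : (0:ℝ) ≤ Real.exp (-(∑ k, Δ k * y k)) := (Real.exp_pos _).le
    have h4 : 1 - (1/2) * (y ⬝ᵥ M.mulVec y) ≤ Real.exp (-(1/2) * (y ⬝ᵥ M.mulVec y)) := by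
      linarith
    have h5 : Real.exp (-(∑ k, Δ k * y k)) * (1 - (1/2) * (y ⬝ᵥ M.mulVec y))
        ≤ Real.exp (-(∑ k, Δ k * y k)) * Real.exp (-(1/2) * (y ⬝ᵥ M.mulVec y)) :=
      mul_le_mul_of_nonneg_left h4 h3
    exact mul_le_mul_of_nonneg_left h5 hfa
  have hmono := setIntegral_mono_on hLint hFint hSm hle
  -- value of the lower integral
  have hZval : ∫ y in S, ∏ k, (y k) ^ (Z k) * Real.exp (-(Δ k * y k)) = ∏ k, (Δ k)⁻¹ := by
    rw [hVal Z]
    exact Finset.prod_congr rfl fun k _ => by simp [hZ]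
  have hEval : ∀ i j : Fin m,
      ∫ y in S, ∏ k, (y k) ^ (E i j k) * Real.exp (-(Δ k * y k))
        = (1 + if i = j then 1 else 0) * ((Δ i * Δ j)⁻¹ * ∏ k, (Δ k)⁻¹) := by
    intro i j
    rw [hVal (E i j)]
    have h1 : ∀ k, ((Nat.factorial (E i j k)) : ℝ) / Δ k ^ (E i j k + 1)
        = ((Nat.factorial (E i j k)) : ℝ) * ((Δ k ^ (E i j k))⁻¹ * (Δ k)⁻¹) := fun k => by
      rw [pow_succ]
      field_simp
    rw [Finset.prod_congr rfl fun k _ => h1 k, Finset.prod_mul_distrib,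
      Finset.prod_mul_distrib, ← Nat.cast_prod]
    have h3 : (∏ x, (Δ x ^ E i j x)⁻¹) = (Δ i)⁻¹ * (Δ j)⁻¹ := by
      simp only [hE, ← inv_pow]
      exact MillsAux.prod_pow_E i j fun x => (Δ x)⁻¹
    have h4 : ((∏ k, Nat.factorial (E i j k) : ℕ) : ℝ) = 1 + if i = j then 1 else 0 := by
      simp only [hE]
      rw [MillsAux.prod_fact_E i j]
      split <;> norm_num
    rw [h3, h4]
    ring
  have hLval : ∫ y in S,
      f a * ((∏ k, (y k) ^ (Z k) * Real.exp (-(Δ k * y k)))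
        - (1/2) * ∑ i, ∑ j, M i j * ∏ k, (y k) ^ (E i j k) * Real.exp (-(Δ k * y k)))
      = f a * ((∏ k, (Δ k)⁻¹)
        - (1/2) * ∑ i, ∑ j, M i j * ((1 + if i = j then 1 else 0)
            * ((Δ i * Δ j)⁻¹ * ∏ k, (Δ k)⁻¹))) := by
    rw [integral_const_mul]
    congr 1
    rw [integral_sub (hInt Z) (hsumInt.const_mul _), integral_const_mul, hZval]
    congr 2
    rw [integral_finset_sum (f := fun i (y : Fin m → ℝ) =>
      ∑ j, M i j * ∏ k, (y k) ^ (E i j k) * Real.exp (-(Δ k * y k))) _ (fun i _ => integrable_finset_sum _ fun j _ =>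
      (hInt (E i j)).const_mul _)]
    refine Finset.sum_congr rfl fun i _ => ?_
    rw [integral_finset_sum (f := fun j (y : Fin m → ℝ) =>
      M i j * ∏ k, (y k) ^ (E i j k) * Real.exp (-(Δ k * y k))) _ (fun j _ => (hInt (E i j)).const_mul _)]
    refine Finset.sum_congr rfl fun j _ => ?_
    rw [integral_const_mul, hEval i j]
  -- translation
  have hAm : MeasurableSet {x : Fin m → ℝ | ∀ j, a j < x j} := by
    have hset : {x : Fin m → ℝ | ∀ j, a j < x j} = Set.univ.pi fun j => Set.Ioi (a j) := by
      ext x; simp [Set.mem_pi]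
    rw [hset]
    exact MeasurableSet.univ_pi fun _ => measurableSet_Ioi
  have htrans : ∫ x in {x : Fin m → ℝ | ∀ j, a j < x j}, f x = ∫ y in S, f (y + a) := by
    rw [← integral_indicator hAm,
      ← integral_add_right_eq_self (fun x => ({x : Fin m → ℝ | ∀ j, a j < x j}).indicator f x) a,
      ← integral_indicator hSm]
    congr 1
    funext y
    by_cases hy : y ∈ S
    · rw [Set.indicator_of_mem hy, Set.indicator_of_mem]
      intro j
      have h0 : (0:ℝ) < y j := hy j (Set.mem_univ j)
      have : (y + a) j = y j + a j := rfl
      rw [this]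
      linarith
    · rw [Set.indicator_of_notMem hy, Set.indicator_of_notMem]
      obtain ⟨j, hj⟩ : ∃ j, ¬ (0:ℝ) < y j := by
        simpa [hSdef, Set.mem_pi] using hy
      intro hmem
      have := hmem j
      have h1 : (y + a) j = y j + a j := rfl
      rw [h1] at this
      exact hj (by linarith)
  -- final arithmetic
  have hfinal : f a * (∏ i, Δ i)⁻¹ *
      (1 - (1/2) * ∑ i, ∑ j, M i j * (1 + if i = j then 1 else 0) / (Δ i * Δ j))
      = f a * ((∏ k, (Δ k)⁻¹)
        - (1/2) * ∑ i, ∑ j, M i j * ((1 + if i = j then 1 else 0)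
            * ((Δ i * Δ j)⁻¹ * ∏ k, (Δ k)⁻¹))) := by
    rw [Finset.prod_inv_distrib]
    have hsum_eq : ∑ i, ∑ j, M i j * ((1 + if i = j then 1 else 0)
        * ((Δ i * Δ j)⁻¹ * (∏ x, Δ x)⁻¹))
        = (∑ i, ∑ j, M i j * (1 + if i = j then 1 else 0) / (Δ i * Δ j)) * (∏ x, Δ x)⁻¹ := by
      rw [Finset.sum_mul]
      refine Finset.sum_congr rfl fun i _ => ?_
      rw [Finset.sum_mul]
      refine Finset.sum_congr rfl fun j _ => ?_
      ring
    rw [hsum_eq]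
    ring
  rw [htrans, hfinal, ← hLval]
  exact hmono
end

section
/- Let (c_n) be a sequence of positive reals and α > 0 with n·Φ(-c_n) → α as n → ∞. Then c_n → ∞ and c_n² / (2 log n) → 1 as n → ∞. -/
open Filter MeasureTheory

noncomputable def stdNormalPdf (t : ℝ) : ℝ := (2 * Real.pi) ^ (-(1 : ℝ) / 2) * Real.exp (-t ^ 2 / 2)

section BonferroniAux
open Set Real

lemma gauss_integrableOn (c : ℝ) : IntegrableOn (fun t : ℝ => Real.exp (-t^2/2)) (Ioi c) := by
  have : (fun t : ℝ => Real.exp (-t^2/2)) = fun t : ℝ => Real.exp (-(1/2) * t^2) := by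
    ext t; ring_nf
  rw [this]
  exact (integrable_exp_neg_mul_sq (by norm_num)).integrableOn

lemma deriv_neg_exp (t : ℝ) : HasDerivAt (fun t : ℝ => -Real.exp (-t^2/2)) (t * Real.exp (-t^2/2)) t := by
  have h1 : HasDerivAt (fun t : ℝ => -t^2/2) (-t) t := by
    have := ((hasDerivAt_pow 2 t).neg).div_const 2
    simpa using this.congr_deriv (by ring)
  have := (h1.exp).neg
  exact this.congr_deriv (by ring)

lemma integral_x_exp (c : ℝ) : ∫ t in Ioi c, t * Real.exp (-t^2/2) = Real.exp (-c^2/2) := by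
  have key := integral_Ioi_of_hasDerivAt_of_tendsto' (f := fun t : ℝ => -Real.exp (-t^2/2))
    (f' := fun t => t * Real.exp (-t^2/2)) (a := c) (m := 0)
    (fun x _ => deriv_neg_exp x) ?_ ?_
  · simpa using key
  · -- integrability of t * exp(-t^2/2)
    have : (fun t : ℝ => t * Real.exp (-t^2/2)) = fun t : ℝ => t * Real.exp (-(1/2) * t^2) := by
      ext t; ring_nf
    rw [this]
    exact (integrable_mul_exp_neg_mul_sq (by norm_num)).integrableOn
  · have h : Tendsto (fun x : ℝ => x^2/2) atTop atTop :=
      (tendsto_pow_atTop two_ne_zero).atTop_div_const (by norm_num)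
    have h2 : Tendsto (fun x : ℝ => -x^2/2) atTop atBot := by
      rw [show (fun x:ℝ => -x^2/2) = (fun x:ℝ => -(x^2/2)) from funext fun x => by ring]
      exact tendsto_neg_atTop_atBot.comp h
    have h3 : Tendsto (fun x : ℝ => Real.exp (-x^2/2)) atTop (nhds 0) :=
      Real.tendsto_exp_atBot.comp h2
    simpa using h3.neg

lemma deriv_exp_gauss (t : ℝ) : HasDerivAt (fun t : ℝ => Real.exp (-t^2/2)) (-t * Real.exp (-t^2/2)) t := by
  have h1 : HasDerivAt (fun t : ℝ => -t^2/2) (-t) t := by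
    have := ((hasDerivAt_pow 2 t).neg).div_const 2
    simpa using this.congr_deriv (by ring)
  simpa [mul_comm] using h1.exp

lemma tail_ub (c : ℝ) (hc : 0 < c) :
    ∫ t in Ioi c, Real.exp (-t^2/2) ≤ Real.exp (-c^2/2) / c := by
  have hmono : ∫ t in Ioi c, Real.exp (-t^2/2) ≤ ∫ t in Ioi c, (t/c) * Real.exp (-t^2/2) := by
    apply setIntegral_mono_on (gauss_integrableOn c)
    · have : (fun t : ℝ => (t/c) * Real.exp (-t^2/2))
          = fun t : ℝ => (1/c) * (t * Real.exp (-(1/2) * t^2)) := by ext t; ring_nf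
      rw [this]
      exact ((integrable_mul_exp_neg_mul_sq (by norm_num)).const_mul _).integrableOn
    · exact measurableSet_Ioi
    · intro t ht
      have h1 : 1 ≤ t / c := (one_le_div hc).mpr (le_of_lt ht)
      nlinarith [Real.exp_pos (-t^2/2)]
  have heq : ∫ t in Ioi c, (t/c) * Real.exp (-t^2/2) = Real.exp (-c^2/2) / c := by
    have : (fun t : ℝ => (t/c) * Real.exp (-t^2/2))
        = fun t : ℝ => (1/c) * (t * Real.exp (-t^2/2)) := by ext t; ring
    rw [this, integral_const_mul, integral_x_exp]
    ring
  linarith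

lemma deriv_g (t : ℝ) : HasDerivAt (fun t : ℝ => -((t/(1+t^2)) * Real.exp (-t^2/2)))
    (Real.exp (-t^2/2) * (t^4 + 2*t^2 - 1)/(1+t^2)^2) t := by
  have hne : (1:ℝ) + t^2 ≠ 0 := by positivity
  have h1 : HasDerivAt (fun t : ℝ => t/(1+t^2)) ((1-t^2)/(1+t^2)^2) t := by
    have hd : HasDerivAt (fun t : ℝ => 1 + t^2) (2*t) t := by
      simpa using ((hasDerivAt_pow 2 t).const_add 1)
    have := (hasDerivAt_id t).div hd hne
    exact this.congr_deriv (by simp [id]; ring_nf)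
  have h2 := deriv_exp_gauss t
  have := (h1.mul h2).neg
  apply this.congr_deriv
  field_simp
  ring

lemma integral_g (c : ℝ) : ∫ t in Ioi c, Real.exp (-t^2/2) * (t^4 + 2*t^2 - 1)/(1+t^2)^2
    = (c/(1+c^2)) * Real.exp (-c^2/2) := by
  have hint : IntegrableOn (fun t : ℝ => Real.exp (-t^2/2) * (t^4 + 2*t^2 - 1)/(1+t^2)^2) (Ioi c) := by
    apply Integrable.mono' (gauss_integrableOn c)
    · apply Continuous.aestronglyMeasurable
      fun_prop (disch := intro x; positivity)
    · refine Eventually.of_forall fun t => ?_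
      rw [Real.norm_eq_abs, abs_div, abs_mul, abs_of_nonneg (Real.exp_pos _).le,
        abs_of_nonneg (by positivity : (0:ℝ) ≤ (1+t^2)^2)]
      rw [div_le_iff₀ (by positivity)]
      have h1 : |t^4 + 2*t^2 - 1| ≤ (1+t^2)^2 := by
        rw [abs_le]; constructor <;> nlinarith [sq_nonneg t, sq_nonneg (t^2)]
      nlinarith [Real.exp_pos (-t^2/2), abs_nonneg (t^4+2*t^2-1)]
  have key := integral_Ioi_of_hasDerivAt_of_tendsto'
    (f := fun t : ℝ => -((t/(1+t^2)) * Real.exp (-t^2/2)))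
    (f' := fun t : ℝ => Real.exp (-t^2/2) * (t^4 + 2*t^2 - 1)/(1+t^2)^2) (a := c) (m := 0)
    (fun x _ => deriv_g x) hint ?_
  · rw [key]; ring
  · have hg0 : Tendsto (fun x : ℝ => Real.exp (-x^2/2)) atTop (nhds 0) := by
      have h : Tendsto (fun x : ℝ => x^2/2) atTop atTop :=
        (tendsto_pow_atTop two_ne_zero).atTop_div_const (by norm_num)
      have h2 : Tendsto (fun x : ℝ => -x^2/2) atTop atBot := by
        rw [show (fun x:ℝ => -x^2/2) = (fun x:ℝ => -(x^2/2)) from funext fun x => by ring]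
        exact tendsto_neg_atTop_atBot.comp h
      exact Real.tendsto_exp_atBot.comp h2
    apply squeeze_zero_norm ?_ hg0
    · intro t
      rw [norm_neg, norm_mul, Real.norm_eq_abs, Real.norm_eq_abs,
        abs_of_nonneg (Real.exp_pos _).le]
      have h1 : |t/(1+t^2)| ≤ 1 := by
        rw [abs_div, abs_of_nonneg (by positivity : (0:ℝ) ≤ 1+t^2), div_le_one (by positivity)]
        nlinarith [abs_nonneg t, sq_abs t, sq_nonneg (|t|-1)]
      nlinarith [Real.exp_pos (-t^2/2), abs_nonneg (t/(1+t^2))]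

lemma tail_lb (c : ℝ) (hc : 0 ≤ c) :
    (c/(1+c^2)) * Real.exp (-c^2/2) ≤ ∫ t in Ioi c, Real.exp (-t^2/2) := by
  rw [← integral_g c]
  apply setIntegral_mono_on ?_ (gauss_integrableOn c) measurableSet_Ioi
  · intro t ht
    rw [div_le_iff₀ (by positivity)]
    nlinarith [Real.exp_pos (-t^2/2), sq_nonneg t, sq_nonneg (t^2)]
  · apply Integrable.mono' (gauss_integrableOn c)
    · apply Continuous.aestronglyMeasurable
      fun_prop (disch := intro x; positivity)
    · refine Eventually.of_forall fun t => ?_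
      rw [Real.norm_eq_abs, abs_div, abs_mul, abs_of_nonneg (Real.exp_pos _).le,
        abs_of_nonneg (by positivity : (0:ℝ) ≤ (1+t^2)^2)]
      rw [div_le_iff₀ (by positivity)]
      have h1 : |t^4 + 2*t^2 - 1| ≤ (1+t^2)^2 := by
        rw [abs_le]; constructor <;> nlinarith [sq_nonneg t, sq_nonneg (t^2)]
      nlinarith [Real.exp_pos (-t^2/2), abs_nonneg (t^4+2*t^2-1)]



lemma symm_repr (a : ℝ) : (∫ t in Set.Iic (-a), stdNormalPdf t)
    = (2 * Real.pi) ^ (-(1 : ℝ) / 2) * ∫ t in Ioi a, Real.exp (-t^2/2) := by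
  have h1 : (∫ t in Set.Iic (-a), stdNormalPdf t) = ∫ t in Set.Iic (-a), stdNormalPdf (-t) := by
    congr 1; ext t; simp [stdNormalPdf]
  rw [h1, integral_comp_neg_Iic, neg_neg]
  unfold stdNormalPdf
  rw [integral_const_mul]


end BonferroniAux

theorem bonferroni_critical_value (c : ℕ → ℝ) (hc : ∀ n, 0 < c n) (α : ℝ) (hα : 0 < α)
    (hlim : Tendsto (fun n : ℕ => (n : ℝ) * ∫ t in Set.Iic (-(c n)), stdNormalPdf t)
      atTop (nhds α)) :
    Tendsto c atTop atTop ∧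
      Tendsto (fun n : ℕ => (c n) ^ 2 / (2 * Real.log n)) atTop (nhds 1) := by
  set K : ℝ := (2 * Real.pi) ^ (-(1 : ℝ) / 2) with hK
  have hKpos : 0 < K := by
    apply Real.rpow_pos_of_pos; positivity
  set I : ℕ → ℝ := fun n => ∫ t in Set.Ioi (c n), Real.exp (-t^2/2) with hI
  have hlim' : Tendsto (fun n : ℕ => (n : ℝ) * (K * I n)) atTop (nhds α) := by
    apply hlim.congr; intro n; rw [symm_repr]
  have hIlb : ∀ n, (c n/(1+(c n)^2)) * Real.exp (-(c n)^2/2) ≤ I n :=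
    fun n => tail_lb (c n) (hc n).le
  have hIub : ∀ n, I n ≤ Real.exp (-(c n)^2/2) / (c n) :=
    fun n => tail_ub (c n) (hc n)
  have hIpos : ∀ n, 0 < I n := fun n =>
    lt_of_lt_of_le (by have := hc n; positivity) (hIlb n)
  have hKIpos : ∀ n, 0 < K * I n := fun n => mul_pos hKpos (hIpos n)
  -- K * I n → 0
  have hKI0 : Tendsto (fun n : ℕ => K * I n) atTop (nhds 0) := by
    have h1 : Tendsto (fun n : ℕ => ((n:ℝ) * (K * I n)) * (1/(n:ℝ))) atTop (nhds (α * 0)) :=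
      hlim'.mul (tendsto_one_div_atTop_nhds_zero_nat)
    rw [mul_zero] at h1
    apply h1.congr'
    filter_upwards [eventually_ge_atTop 1] with n hn
    have : (n:ℝ) ≠ 0 := Nat.cast_ne_zero.mpr (by omega)
    field_simp
  -- Part 1 : c → atTop
  have hctop : Tendsto c atTop atTop := by
    rw [tendsto_atTop]
    intro M
    set M' : ℝ := max M 1 with hM'
    have hM'pos : 0 < M' := lt_of_lt_of_le one_pos (le_max_right _ _)
    have hδ : 0 < K * ((M'/(1+M'^2)) * Real.exp (-M'^2/2)) := by positivity
    filter_upwards [hKI0.eventually (eventually_lt_nhds hδ)] with n hn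
    by_contra hcon
    push_neg at hcon
    have hcM : c n ≤ M' := le_trans hcon.le (le_max_left _ _)
    have hsub : ∫ t in Set.Ioi M', Real.exp (-t^2/2) ≤ I n := by
      apply setIntegral_mono_set (gauss_integrableOn (c n))
      · filter_upwards with t using (Real.exp_pos _).le
      · exact Eventually.of_forall (fun t ht => lt_of_le_of_lt hcM ht)
    have := tail_lb M' hM'pos.le
    have : K * ((M'/(1+M'^2)) * Real.exp (-M'^2/2)) ≤ K * I n := by
      apply mul_le_mul_of_nonneg_left (le_trans this hsub) hKpos.le
    linarith [hn]
  refine ⟨hctop, ?_⟩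
  -- Part 2
  set L : ℕ → ℝ := fun n => -Real.log (K * I n) with hL
  have hlogn : Tendsto (fun n : ℕ => Real.log n) atTop atTop :=
    Real.tendsto_log_atTop.comp tendsto_natCast_atTop_atTop
  have hlogdiff : Tendsto (fun n : ℕ => Real.log n - L n) atTop (nhds (Real.log α)) := by
    have h1 : Tendsto (fun n : ℕ => Real.log ((n:ℝ) * (K * I n))) atTop (nhds (Real.log α)) :=
      ((Real.continuousAt_log hα.ne').tendsto).comp hlim'
    apply h1.congr'
    filter_upwards [eventually_ge_atTop 1] with n hn
    have hn0 : (n:ℝ) ≠ 0 := Nat.cast_ne_zero.mpr (by omega)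
    rw [Real.log_mul hn0 (hKIpos n).ne']
    simp [hL]
  have hLdiv : Tendsto (fun n : ℕ => L n / Real.log n) atTop (nhds 1) := by
    have h0 : Tendsto (fun n : ℕ => (Real.log n - L n) / Real.log n) atTop (nhds 0) :=
      hlogdiff.div_atTop hlogn
    have h1 : Tendsto (fun n : ℕ => 1 - (Real.log n - L n) / Real.log n) atTop (nhds (1 - 0)) :=
      tendsto_const_nhds.sub h0
    rw [sub_zero] at h1
    apply h1.congr'
    filter_upwards [hlogn.eventually (eventually_gt_atTop 0)] with n hn
    field_simp
    ring
  -- eventual bounds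
  have hc1 : ∀ᶠ n : ℕ in atTop, 1 ≤ c n := hctop.eventually (eventually_ge_atTop 1)
  have hU : ∀ᶠ n : ℕ in atTop, (c n)^2 ≤ 2 * (Real.log K + L n) := by
    filter_upwards [hc1] with n hn
    have h1 : K * I n ≤ K * Real.exp (-(c n)^2/2) := by
      have h2 : I n ≤ Real.exp (-(c n)^2/2) := by
        refine le_trans (hIub n) ?_
        rw [div_le_iff₀ (hc n)]
        nlinarith [Real.exp_pos (-(c n)^2/2)]
      exact mul_le_mul_of_nonneg_left h2 hKpos.le
    have h3 := Real.log_le_log (hKIpos n) h1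
    rw [Real.log_mul hKpos.ne' (Real.exp_pos _).ne', Real.log_exp] at h3
    simp only [hL]
    nlinarith [h3]
  have hLo : ∀ᶠ n : ℕ in atTop, 2 * (Real.log K + L n - Real.log (2 * c n)) ≤ (c n)^2 := by
    filter_upwards [hc1] with n hn
    have hcpos := hc n
    have h1 : K * (Real.exp (-(c n)^2/2) / (2 * c n)) ≤ K * I n := by
      apply mul_le_mul_of_nonneg_left _ hKpos.le
      refine le_trans ?_ (hIlb n)
      have hfrac : 1/(2*c n) ≤ c n/(1+(c n)^2) := by
        rw [div_le_div_iff₀ (by positivity) (by positivity)]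
        nlinarith
      calc Real.exp (-(c n)^2/2)/(2*c n) = Real.exp (-(c n)^2/2) * (1/(2*c n)) := by ring
        _ ≤ Real.exp (-(c n)^2/2) * (c n/(1+(c n)^2)) :=
            mul_le_mul_of_nonneg_left hfrac (Real.exp_pos _).le
        _ = c n/(1+(c n)^2) * Real.exp (-(c n)^2/2) := by ring
    have h3 := Real.log_le_log (by positivity) h1
    rw [Real.log_mul hKpos.ne' (by positivity), Real.log_div (Real.exp_pos _).ne'
      (by positivity), Real.log_exp] at h3
    simp only [hL]
    nlinarith [h3]
  -- log (2 c n) / log n → 0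
  have hq0 : Tendsto (fun n : ℕ => Real.log (2 * c n) / Real.log n) atTop (nhds 0) := by
    have hloglog : Tendsto (fun n : ℕ => Real.log (Real.log n) / Real.log n) atTop (nhds 0) :=
      (Real.isLittleO_log_id_atTop.tendsto_div_nhds_zero).comp hlogn
    have hφ : Tendsto (fun n : ℕ =>
        (Real.log 2 + (1/2) * (Real.log 6 + Real.log (Real.log n))) / Real.log n)
        atTop (nhds 0) := by
      have h1 : Tendsto (fun n : ℕ => (Real.log 2 + (1/2) * Real.log 6) / Real.log n)
          atTop (nhds 0) := tendsto_const_nhds.div_atTop hlogn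
      have h2 := h1.add (hloglog.const_mul (1/2 : ℝ))
      have h3 : (0:ℝ) + 1/2 * 0 = 0 := by norm_num
      rw [h3] at h2
      apply h2.congr'
      filter_upwards [hlogn.eventually (eventually_gt_atTop 0)] with n hn
      field_simp
      ring
    apply tendsto_of_tendsto_of_tendsto_of_le_of_le' tendsto_const_nhds hφ
    · filter_upwards [hc1, hlogn.eventually (eventually_gt_atTop 0)] with n hn hln
      have h2c : (1:ℝ) ≤ 2 * c n := by linarith
      exact div_nonneg (Real.log_nonneg h2c) hln.le
    · have hL2 : ∀ᶠ n : ℕ in atTop, L n ≤ 2 * Real.log n := by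
        filter_upwards [hLdiv.eventually (eventually_le_nhds (by norm_num : (1:ℝ) < 2)),
          hlogn.eventually (eventually_gt_atTop 0)] with n h1 hln
        rw [div_le_iff₀ hln] at h1
        linarith
      filter_upwards [hc1, hU, hL2, hlogn.eventually (eventually_ge_atTop |Real.log K|),
        hlogn.eventually (eventually_gt_atTop 0)] with n hn hUn hLn hKn hln
      have hcpos := hc n
      have hc2 : (c n)^2 ≤ 6 * Real.log n := by
        have : Real.log K ≤ |Real.log K| := le_abs_self _
        nlinarith
      have hnum : Real.log (2 * c n) ≤ Real.log 2 + (1/2) * (Real.log 6 + Real.log (Real.log n)) := by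
        rw [Real.log_mul two_ne_zero hcpos.ne']
        have hlogc : Real.log (c n) = (1/2) * Real.log ((c n)^2) := by
          rw [Real.log_pow]; push_cast; ring
        have h6 : Real.log ((c n)^2) ≤ Real.log (6 * Real.log n) := by
          apply Real.log_le_log (by positivity) hc2
        rw [Real.log_mul (by norm_num) hln.ne'] at h6
        rw [hlogc]
        linarith
      exact (div_le_div_iff_of_pos_right hln).mpr hnum
  -- final squeeze
  have hhi : Tendsto (fun n : ℕ => (Real.log K + L n) / Real.log n) atTop (nhds 1) := by
    have h1 : Tendsto (fun n : ℕ => Real.log K / Real.log n + L n / Real.log n)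
        atTop (nhds (0 + 1)) := (tendsto_const_nhds.div_atTop hlogn).add hLdiv
    rw [zero_add] at h1
    apply h1.congr; intro n; rw [add_div]
  have hlo : Tendsto (fun n : ℕ => (Real.log K + L n - Real.log (2 * c n)) / Real.log n)
      atTop (nhds 1) := by
    have h1 := hhi.sub hq0
    rw [sub_zero] at h1
    apply h1.congr; intro n; rw [sub_div]
  clear_value K I L
  apply tendsto_of_tendsto_of_tendsto_of_le_of_le' hlo hhi
  · filter_upwards [hLo, hlogn.eventually (eventually_gt_atTop 0)] with n h1 hln
    rw [show (c n)^2/(2*Real.log n) = ((c n)^2/2)/Real.log n from by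
      rw [div_div]]
    have h2 : Real.log K + L n - Real.log (2 * c n) ≤ (c n)^2/2 := by linarith
    exact (div_le_div_iff_of_pos_right hln).mpr h2
  · filter_upwards [hU, hlogn.eventually (eventually_gt_atTop 0)] with n h1 hln
    rw [show (c n)^2/(2*Real.log n) = ((c n)^2/2)/Real.log n from by
      rw [div_div]]
    have h2 : (c n)^2/2 ≤ Real.log K + L n := by linarith
    exact (div_le_div_iff_of_pos_right hln).mpr h2
end
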